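/- For every b > 0 and every ω ∈ (0, π), the function k ↦ 1/(2cosh(2πbk) + 2cos ω) is Lebesgue integrable on ℝ and ∫_ℝ 1/(2cosh(2πbk) + 2cos ω) dk = ω/(2πb·sin ω). -/

import Mathlib

open MeasureTheory Real

lemma resolvent_kernel_diagonal_aux (E s c D pb : ℝ) (hE : 0 < E) (hs : 0 < s)
    (hsc : s ^ 2 + c ^ 2 = 1) (hD : D = 2 * ((E + E⁻¹) / 2) + 2 * c) (hDpos : 0 < D)
    (hpb : 0 < pb) :
    1 / D = 1 / (pb * s) * (1 / (1 + ((E + c) / s) ^ 2) * (E * pb / s)) := by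
  have key : 1 + ((E + c) / s) ^ 2 = E * D / s ^ 2 := by
    rw [hD]; field_simp; ring_nf; linear_combination hsc
  rw [key]
  field_simp

theorem resolvent_kernel_diagonal (b : ℝ) (hb : 0 < b) (ω : ℝ) (hω : ω ∈ Set.Ioo 0 π) :
    Integrable (fun k : ℝ => 1 / (2 * Real.cosh (2 * π * b * k) + 2 * Real.cos ω)) ∧
    (∫ k : ℝ, 1 / (2 * Real.cosh (2 * π * b * k) + 2 * Real.cos ω))
      = ω / (2 * π * b * Real.sin ω) := by
  obtain ⟨hω0, hωπ⟩ := hω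
  have hπ : (0:ℝ) < π := Real.pi_pos
  have hs : 0 < Real.sin ω := Real.sin_pos_of_pos_of_lt_pi hω0 hωπ
  have hcω : -1 < Real.cos ω := by
    have := Real.cos_lt_cos_of_nonneg_of_le_pi hω0.le le_rfl hωπ
    rwa [Real.cos_pi] at this
  have h2πb : 0 < 2 * π * b := by positivity
  set f : ℝ → ℝ := fun k : ℝ => 1 / (2 * Real.cosh (2 * π * b * k) + 2 * Real.cos ω) with hf
  set F : ℝ → ℝ := fun x : ℝ =>
    (1 / (2 * π * b * Real.sin ω)) *
      Real.arctan ((Real.exp (2 * π * b * x) + Real.cos ω) / Real.sin ω) with hFdef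
  have hden : ∀ x : ℝ, 0 < 2 * Real.cosh (2 * π * b * x) + 2 * Real.cos ω := by
    intro x
    have := Real.one_le_cosh (2 * π * b * x)
    linarith
  have hfpos : ∀ x : ℝ, 0 ≤ f x := fun x => (one_div_pos.mpr (hden x)).le
  have hF : ∀ x : ℝ, HasDerivAt F (f x) x := by
    intro x
    have h1 : HasDerivAt (fun x : ℝ => 2 * π * b * x) (2 * π * b) x := by
      simpa using (hasDerivAt_id x).const_mul (2 * π * b)
    have h2 : HasDerivAt (fun x : ℝ => Real.exp (2 * π * b * x))
        (Real.exp (2 * π * b * x) * (2 * π * b)) x :=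
      (Real.hasDerivAt_exp (2 * π * b * x)).comp x h1
    have h3 :
        HasDerivAt (fun x : ℝ => (Real.exp (2 * π * b * x) + Real.cos ω) / Real.sin ω)
          (Real.exp (2 * π * b * x) * (2 * π * b) / Real.sin ω) x :=
      (h2.add_const (Real.cos ω)).div_const (Real.sin ω)
    have h4 := (Real.hasDerivAt_arctan
        ((Real.exp (2 * π * b * x) + Real.cos ω) / Real.sin ω)).comp x h3
    have h5 := h4.const_mul (1 / (2 * π * b * Real.sin ω))
    refine h5.congr_deriv ?_
    have he : 0 < Real.exp (2 * π * b * x) := Real.exp_pos _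
    have hsc : Real.sin ω ^ 2 + Real.cos ω ^ 2 = 1 := Real.sin_sq_add_cos_sq ω
    have hd := hden x
    exact (resolvent_kernel_diagonal_aux _ _ _ _ _ he hs hsc
      (by rw [Real.cosh_eq, Real.exp_neg]) (hden x) h2πb).symm
  have htop : Filter.Tendsto F Filter.atTop
      (nhds ((1 / (2 * π * b * Real.sin ω)) * (π / 2))) := by
    have h1 : Filter.Tendsto (fun x : ℝ => 2 * π * b * x) Filter.atTop Filter.atTop :=
      Filter.Tendsto.const_mul_atTop h2πb Filter.tendsto_id
    have h2 : Filter.Tendsto (fun x : ℝ => (Real.exp (2 * π * b * x) + Real.cos ω) / Real.sin ω)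
        Filter.atTop Filter.atTop :=
      ((Real.tendsto_exp_atTop.comp h1).atTop_add tendsto_const_nhds).atTop_div_const hs
    exact ((Real.tendsto_arctan_atTop.mono_right nhdsWithin_le_nhds).comp h2).const_mul _
  have hbot : Filter.Tendsto F Filter.atBot
      (nhds ((1 / (2 * π * b * Real.sin ω)) * Real.arctan ((0 + Real.cos ω) / Real.sin ω))) := by
    have h1 : Filter.Tendsto (fun x : ℝ => 2 * π * b * x) Filter.atBot Filter.atBot :=
      Filter.Tendsto.const_mul_atBot h2πb Filter.tendsto_id
    have h2 : Filter.Tendsto (fun x : ℝ => (Real.exp (2 * π * b * x) + Real.cos ω) / Real.sin ω)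
        Filter.atBot (nhds ((0 + Real.cos ω) / Real.sin ω)) :=
      (((Real.tendsto_exp_atBot.comp h1)).add tendsto_const_nhds).div_const _
    exact ((Real.continuous_arctan.tendsto _).comp h2).const_mul _
  have hint : Integrable f := by
    have hIoi : IntegrableOn f (Set.Ioi 0) :=
      integrableOn_Ioi_deriv_of_nonneg' (fun x _ => hF x) (fun x _ => hfpos x) htop
    rw [← integrableOn_univ, ← Set.Iio_union_Ici (a := (0:ℝ)), integrableOn_union,
      integrableOn_Ici_iff_integrableOn_Ioi]
    refine ⟨?_, hIoi⟩
    rw [← (Measure.measurePreserving_neg (volume : Measure ℝ)).integrableOn_comp_preimage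
        (Homeomorph.neg ℝ).measurableEmbedding]
    simp only [hf, Function.comp_def, mul_neg, Real.cosh_neg, Set.neg_preimage, Set.neg_Iio,
      neg_zero]
    exact hIoi
  have harc : Real.arctan (Real.cos ω / Real.sin ω) = π / 2 - ω := by
    have ht : Real.tan (π / 2 - ω) = Real.cos ω / Real.sin ω := by
      rw [Real.tan_eq_sin_div_cos, Real.sin_pi_div_two_sub, Real.cos_pi_div_two_sub]
    rw [← ht, Real.arctan_tan] <;> linarith
  refine ⟨hint, ?_⟩
  have := MeasureTheory.integral_of_hasDerivAt_of_tendsto hF hint hbot htop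
  rw [hf] at this
  rw [this, zero_add, harc]
  field_simp
  ring
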